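/- Let H be a central arrangement defined by a subspace V ⊆ R^I, and let R(H) = R[e_i : i∈I] / ⟨ Σ_{i∈I_0} a_i e_{I_0∖{i}} : I_0 ⊆ I and Σ_{i∈I_0} a_i x_i|_V = 0 ⟩, where e_S = ∏_{i∈S} e_i. Then the ideal of relations is already generated by the relations coming from circuits I_0 of the matroid of H. -/

import Mathlib

open MvPolynomial

variable {I : Type} [Fintype I] [DecidableEq I]

/-- The `i`-th coordinate function restricted to the subspace `V ⊆ ℝ^I`. -/
noncomputable def coordOn (V : Submodule ℝ (I → ℝ)) (i : I) : V →ₗ[ℝ] ℝ :=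
  (LinearMap.proj i).comp V.subtype

/-- The element `∑_{i ∈ I₀} a_i e_{I₀∖{i}}` of `ℝ[e_i : i ∈ I]`. -/
noncomputable def relElem (I₀ : Finset I) (a : I → ℝ) : MvPolynomial I ℝ :=
  ∑ i ∈ I₀, a i • ∏ j ∈ I₀.erase i, (X j : MvPolynomial I ℝ)

/-- The relation ideal of `R(H)`: generated by `∑_{i∈I₀} a_i e_{I₀∖{i}}` over all
`I₀ ⊆ I` and linear dependences `∑_{i∈I₀} a_i x_i|_V = 0`. -/
noncomputable def relIdeal (V : Submodule ℝ (I → ℝ)) : Ideal (MvPolynomial I ℝ) :=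
  Ideal.span {p | ∃ (I₀ : Finset I) (a : I → ℝ),
    (∑ i ∈ I₀, a i • coordOn V i) = 0 ∧ p = relElem I₀ a}

/-- `I₀` is a circuit: `{x_i|_V : i ∈ I₀}` is linearly dependent but every proper
subset is independent. -/
def IsCircuit (V : Submodule ℝ (I → ℝ)) (I₀ : Finset I) : Prop :=
  ¬ LinearIndependent ℝ (fun i : I₀ => coordOn V i) ∧
    ∀ S : Finset I, S ⊂ I₀ → LinearIndependent ℝ (fun i : S => coordOn V (i : I))

/-- The subideal generated only by circuit relations. -/
noncomputable def circuitIdeal (V : Submodule ℝ (I → ℝ)) : Ideal (MvPolynomial I ℝ) :=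
  Ideal.span {p | ∃ (I₀ : Finset I) (a : I → ℝ), IsCircuit V I₀ ∧
    (∑ i ∈ I₀, a i • coordOn V i) = 0 ∧ p = relElem I₀ a}

set_option linter.unusedSectionVars false in
lemma relElem_sub_smul (S : Finset I) (a b : I → ℝ) (r : ℝ) :
    relElem S (fun i => a i - r * b i) = relElem S a - r • relElem S b := by
  simp [relElem, sub_smul, Finset.sum_sub_distrib, Finset.smul_sum, mul_smul]

set_option linter.unusedSectionVars false in
lemma relElem_factor (S S' : Finset I) (hss : S' ⊆ S) (a : I → ℝ)
    (h : ∀ i ∈ S, i ∉ S' → a i = 0) :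
    relElem S a = (∏ j ∈ S \ S', X j) * relElem S' a := by
  rw [relElem, relElem, Finset.mul_sum,
    ← Finset.sum_subset hss (by intro i hi hni; simp [h i hi hni])]
  refine Finset.sum_congr rfl fun i hi => ?_
  rw [mul_smul_comm]
  congr 1
  rw [← Finset.prod_union (by simp only [Finset.disjoint_left, Finset.mem_sdiff, Finset.mem_erase]; tauto)]
  congr 1
  ext j
  simp only [Finset.mem_erase, Finset.mem_sdiff, Finset.mem_union]
  constructor
  · rintro ⟨hji, hjS⟩
    by_cases hjS' : j ∈ S'
    · exact Or.inr ⟨hji, hjS'⟩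
    · exact Or.inl ⟨hjS, hjS'⟩
  · rintro (⟨hjS, hjS'⟩ | ⟨hji, hjS'⟩)
    · exact ⟨fun hji => hjS' (hji ▸ hi), hjS⟩
    · exact ⟨hji, hss hjS'⟩

lemma key (V : Submodule ℝ (I → ℝ)) :
    ∀ (n : ℕ) (S : Finset I), S.card ≤ n → ∀ a : I → ℝ,
      (∑ i ∈ S, a i • coordOn V i) = 0 → relElem S a ∈ circuitIdeal V := by
  intro n
  induction n with
  | zero =>
    intro S hS a _
    obtain rfl : S = ∅ := Finset.card_eq_zero.mp (Nat.le_zero.mp hS)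
    simp [relElem]
  | succ n ih =>
    intro S hS a ha
    by_cases hsup : ∀ i ∈ S, a i ≠ 0
    · by_cases hcirc : ∀ T : Finset I, T ⊂ S → LinearIndependent ℝ (fun i : T => coordOn V (i : I))
      · rcases S.eq_empty_or_nonempty with rfl | ⟨k, hk⟩
        · simp [relElem]
        · apply Ideal.subset_span
          refine ⟨S, a, ⟨?_, hcirc⟩, ha, rfl⟩
          rw [Fintype.not_linearIndependent_iff]
          refine ⟨fun i => a i, ?_, ⟨⟨k, hk⟩, hsup k hk⟩⟩
          rw [← ha]
          exact Finset.sum_coe_sort S (fun i => a i • coordOn V i)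
      · push_neg at hcirc
        obtain ⟨T, hTS, hTdep⟩ := hcirc
        rw [Fintype.not_linearIndependent_iff] at hTdep
        obtain ⟨g, hg0, ⟨⟨k, hkT⟩, hgk⟩⟩ := hTdep
        set b : I → ℝ := fun i => if h : i ∈ T then g ⟨i, h⟩ else 0 with hb
        have hbk : b k ≠ 0 := by simp [hb, hkT, hgk]
        have hbT : ∀ i ∈ S, i ∉ T → b i = 0 := fun i _ hni => by simp [hb, hni]
        have hbsumT : ∑ i ∈ T, b i • coordOn V i = 0 := by
          rw [← Finset.sum_coe_sort T (fun i => b i • coordOn V i)] at *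
          rw [← hg0]
          refine Finset.sum_congr rfl fun i _ => ?_
          simp [hb, i.2]
        have hbsum : ∑ i ∈ S, b i • coordOn V i = 0 := by
          rw [← Finset.sum_subset hTS.subset (fun i hi hni => by simp [hbT i hi hni])]
          exact hbsumT
        set r := a k / b k with hr
        have hkS : k ∈ S := hTS.subset hkT
        set c : I → ℝ := fun i => a i - r * b i with hc
        have hck : c k = 0 := by
          show a k - a k / b k * b k = 0; rw [div_mul_cancel₀ _ hbk, sub_self]
        have hcsum : ∑ i ∈ S, c i • coordOn V i = 0 := by
          simp only [hc, sub_smul, mul_smul, Finset.sum_sub_distrib, ha,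
            ← Finset.smul_sum, hbsum, smul_zero, sub_zero]
          have : ∀ x ∈ S, (a x - r * b x) • coordOn V x
              = a x • coordOn V x - r • (b x • coordOn V x) := fun x _ => by
            rw [sub_smul (a x) (r * b x) (coordOn V x), mul_smul r (b x) (coordOn V x)]
          rw [Finset.sum_congr rfl this]
          rw [Finset.sum_sub_distrib, ha]
          rw [← Finset.smul_sum, hbsum, smul_zero, sub_zero]
        have heq : relElem S a = relElem S c + r • relElem S b := by
          rw [hc, relElem_sub_smul]; ring
        rw [heq]
        rw [MvPolynomial.smul_eq_C_mul]
        refine add_mem ?_ (Ideal.mul_mem_left _ _ ?_)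
        · -- support of c is in S.filter, which is ⊆ S.erase k ⊊ S
          have hsub : S.filter (fun i => c i ≠ 0) ⊆ S := Finset.filter_subset _ _
          rw [relElem_factor S _ hsub c (fun i hi hni => by
            by_contra h; exact hni (Finset.mem_filter.mpr ⟨hi, h⟩))]
          refine Ideal.mul_mem_left _ _ (ih _ ?_ c ?_)
          · have h1 : S.filter (fun i => c i ≠ 0) ⊆ S.erase k := by
              intro i hi
              rcases Finset.mem_filter.mp hi with ⟨hiS, hic⟩
              exact Finset.mem_erase.mpr ⟨fun h => hic (h ▸ hck), hiS⟩
            calc (S.filter (fun i => c i ≠ 0)).card ≤ (S.erase k).card :=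
                  Finset.card_le_card h1
              _ = S.card - 1 := Finset.card_erase_of_mem hkS
              _ ≤ n := by omega
          · rw [Finset.sum_subset hsub (fun i hi hni => ?_)]
            · exact hcsum
            · have : c i = 0 := by
                by_contra h; exact hni (Finset.mem_filter.mpr ⟨hi, h⟩)
              simp [this]
        · rw [relElem_factor S T hTS.subset b hbT]
          refine Ideal.mul_mem_left _ _ (ih T ?_ b hbsumT)
          have := Finset.card_lt_card hTS
          omega
    · -- some a i = 0 on S: shrink to support
      push_neg at hsup
      obtain ⟨k, hkS, hak⟩ := hsup
      have hsub : S.filter (fun i => a i ≠ 0) ⊆ S := Finset.filter_subset _ _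
      rw [relElem_factor S _ hsub a (fun i hi hni => by
        by_contra h; exact hni (Finset.mem_filter.mpr ⟨hi, h⟩))]
      refine Ideal.mul_mem_left _ _ (ih _ ?_ a ?_)
      · have h1 : S.filter (fun i => a i ≠ 0) ⊆ S.erase k := by
          intro i hi
          rcases Finset.mem_filter.mp hi with ⟨hiS, hia⟩
          exact Finset.mem_erase.mpr ⟨fun h => hia (h ▸ hak), hiS⟩
        calc (S.filter (fun i => a i ≠ 0)).card ≤ (S.erase k).card :=
              Finset.card_le_card h1
          _ = S.card - 1 := Finset.card_erase_of_mem hkS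
          _ ≤ n := by omega
      · rw [Finset.sum_subset hsub (fun i hi hni => ?_)]
        · exact ha
        · have : a i = 0 := by
            by_contra h; exact hni (Finset.mem_filter.mpr ⟨hi, h⟩)
          simp [this]

/-- for a central arrangement given by `V ⊆ ℝ^I`, the relation ideal of
`R(H) = ℝ[e_i : i ∈ I] / ⟨∑_{i∈I₀} a_i e_{I₀∖{i}} : ∑_{i∈I₀} a_i x_i|_V = 0⟩` is
already generated by the relations coming from the circuits of the matroid of `H`. -/
theorem stmt14 (V : Submodule ℝ (I → ℝ)) :
    relIdeal V = circuitIdeal V := by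
  apply le_antisymm
  · rw [relIdeal, Ideal.span_le]
    rintro p ⟨I₀, a, ha, rfl⟩
    exact key V I₀.card I₀ le_rfl a ha
  · apply Ideal.span_mono
    rintro p ⟨I₀, a, _, ha, rfl⟩
    exact ⟨I₀, a, ha, rfl⟩
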